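/- Let ψ₀ : ℝ² → ℝ be harmonic on the open set {ψ₀ > 0} with |∇ψ₀|² = λ² there for a constant λ > 0. Then all second derivatives of ψ₀ vanish on {ψ₀ > 0}; consequently ψ₀ is affine on each connected component of {ψ₀ > 0}. -/

import Mathlib

/-- First partial derivative in the `x` direction. -/
noncomputable def dx (u : ℝ × ℝ → ℝ) (p : ℝ × ℝ) : ℝ := fderiv ℝ u p (1, 0)

/-- First partial derivative in the `y` direction. -/
noncomputable def dy (u : ℝ × ℝ → ℝ) (p : ℝ × ℝ) : ℝ := fderiv ℝ u p (0, 1)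

/-- The Laplacian on `ℝ²`. -/
noncomputable def lap (u : ℝ × ℝ → ℝ) (p : ℝ × ℝ) : ℝ := dx (dx u) p + dy (dy u) p

/-- A continuous linear map on `ℝ²` vanishing on the standard basis is zero. -/
lemma clm_eq_zero (L : ℝ × ℝ →L[ℝ] ℝ) (h1 : L (1, 0) = 0) (h2 : L (0, 1) = 0) : L = 0 := by
  ext
  · simpa using h1
  · simpa using h2

/-- A function with zero derivative on an open preconnected set is constant there. -/
lemma const_on_preconnected {U : Set (ℝ × ℝ)} (hUo : IsOpen U) (hUc : IsPreconnected U)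
    (g : ℝ × ℝ → ℝ) (hg : ∀ x ∈ U, HasFDerivAt g (0 : (ℝ × ℝ) →L[ℝ] ℝ) x) {x : ℝ × ℝ} (hx : x ∈ U) :
    ∀ y ∈ U, g y = g x := by
  -- local constancy
  have hloc : ∀ y ∈ U, ∃ ε > 0, Metric.ball y ε ⊆ U ∧ ∀ z ∈ Metric.ball y ε, g z = g y := by
    intro y hy
    obtain ⟨ε, hε, hball⟩ := Metric.isOpen_iff.1 hUo y hy
    refine ⟨ε, hε, hball, fun z hz => ?_⟩
    have hconv : Convex ℝ (Metric.ball y ε) := convex_ball y ε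
    have hdiff : DifferentiableOn ℝ g (Metric.ball y ε) :=
      fun w hw => ((hg w (hball hw)).differentiableAt).differentiableWithinAt
    refine hconv.is_const_of_fderivWithin_eq_zero hdiff (fun w hw => ?_) hz
      (Metric.mem_ball_self hε)
    rw [fderivWithin_of_isOpen Metric.isOpen_ball hw]
    exact (hg w (hball hw)).fderiv
  set u : Set (ℝ × ℝ) := {y | ∃ ε > 0, Metric.ball y ε ⊆ U ∧ ∀ z ∈ Metric.ball y ε, g z = g x}
  set v : Set (ℝ × ℝ) := {y | ∃ ε > 0, Metric.ball y ε ⊆ U ∧ ∀ z ∈ Metric.ball y ε, g z ≠ g x}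
  have hou : IsOpen u := by
    apply Metric.isOpen_iff.2
    rintro y ⟨ε, hε, hball, hconst⟩
    refine ⟨ε / 2, by linarith, fun z hz => ?_⟩
    have hzy : dist z y < ε / 2 := hz
    refine ⟨ε / 2, by linarith, fun w hw => hball ?_, fun w hw => hconst w ?_⟩ <;>
    · have := Metric.mem_ball.1 hw
      exact Metric.mem_ball.2 (by calc dist w y ≤ dist w z + dist z y := dist_triangle _ _ _
                                      _ < ε := by linarith)
  have hov : IsOpen v := by
    apply Metric.isOpen_iff.2
    rintro y ⟨ε, hε, hball, hconst⟩
    refine ⟨ε / 2, by linarith, fun z hz => ?_⟩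
    have hzy : dist z y < ε / 2 := hz
    refine ⟨ε / 2, by linarith, fun w hw => hball ?_, fun w hw => hconst w ?_⟩ <;>
    · have := Metric.mem_ball.1 hw
      exact Metric.mem_ball.2 (by calc dist w y ≤ dist w z + dist z y := dist_triangle _ _ _
                                      _ < ε := by linarith)
  have hdisj : Disjoint u v := by
    rw [Set.disjoint_left]
    rintro y ⟨ε₁, hε₁, _, h₁⟩ ⟨ε₂, hε₂, _, h₂⟩
    exact h₂ y (Metric.mem_ball_self hε₂) (h₁ y (Metric.mem_ball_self hε₁))
  have hsub : U ⊆ u ∪ v := by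
    intro y hy
    obtain ⟨ε, hε, hball, hconst⟩ := hloc y hy
    by_cases h : g y = g x
    · exact Or.inl ⟨ε, hε, hball, fun z hz => (hconst z hz).trans h⟩
    · exact Or.inr ⟨ε, hε, hball, fun z hz => (hconst z hz).symm ▸ h⟩
  have hnon : (U ∩ u).Nonempty := by
    obtain ⟨ε, hε, hball, hconst⟩ := hloc x hx
    exact ⟨x, hx, ε, hε, hball, hconst⟩
  have hUu : U ⊆ u := hUc.subset_left_of_subset_union hou hov hdisj hsub hnon
  intro y hy
  obtain ⟨ε, hε, _, hconst⟩ := hUu hy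
  exact hconst y (Metric.mem_ball_self hε)

theorem stmt_8 (ψ : ℝ × ℝ → ℝ) (lam : ℝ) (hlam : 0 < lam)
    (P : Set (ℝ × ℝ)) (hP : P = {x | 0 < ψ x}) (hPo : IsOpen P)
    (hsmooth : ContDiffOn ℝ 2 ψ P)
    (hharm : ∀ x ∈ P, lap ψ x = 0)
    (heik : ∀ x ∈ P, (dx ψ x) ^ 2 + (dy ψ x) ^ 2 = lam ^ 2) :
    (∀ x ∈ P, dx (dx ψ) x = 0 ∧ dx (dy ψ) x = 0 ∧ dy (dx ψ) x = 0 ∧ dy (dy ψ) x = 0) ∧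
    ∀ x₀ ∈ P, ∃ a b c : ℝ, ∀ x ∈ connectedComponentIn P x₀,
      ψ x = a * x.1 + b * x.2 + c := by
  have key : ∀ x ∈ P, HasFDerivAt (dx ψ) (0 : (ℝ × ℝ) →L[ℝ] ℝ) x ∧
      HasFDerivAt (dy ψ) (0 : (ℝ × ℝ) →L[ℝ] ℝ) x := by
    intro x hx
    have hPx : P ∈ nhds x := hPo.mem_nhds hx
    have hCD : ContDiffAt ℝ 2 ψ x := hsmooth.contDiffAt hPx
    have hCD1 : ContDiffAt ℝ 1 (fderiv ℝ ψ) x := hCD.fderiv_right (by norm_num)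
    have hf''d : DifferentiableAt ℝ (fderiv ℝ ψ) x := hCD1.differentiableAt (by norm_num)
    obtain ⟨f'', hf''⟩ : ∃ f'' : (ℝ × ℝ) →L[ℝ] (ℝ × ℝ) →L[ℝ] ℝ,
        HasFDerivAt (fderiv ℝ ψ) f'' x := ⟨_, hf''d.hasFDerivAt⟩
    have hev : ∀ᶠ y in nhds x, HasFDerivAt ψ (fderiv ℝ ψ y) y := by
      filter_upwards [hPx] with y hy
      exact ((hsmooth.contDiffAt (hPo.mem_nhds hy)).differentiableAt
        (by norm_num)).hasFDerivAt
    have hsymm : ∀ v w, f'' v w = f'' w v :=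
      second_derivative_symmetric_of_eventually hev hf''
    -- derivatives of dx ψ and dy ψ
    have hD : ∀ w : ℝ × ℝ, HasFDerivAt (fun p => fderiv ℝ ψ p w)
        ((ContinuousLinearMap.apply ℝ ℝ w).comp f'') x := fun w =>
      (ContinuousLinearMap.apply ℝ ℝ w).hasFDerivAt.comp x hf''
    have h1 : HasFDerivAt (dx ψ) ((ContinuousLinearMap.apply ℝ ℝ (1, 0)).comp f'') x := hD (1, 0)
    have h2 : HasFDerivAt (dy ψ) ((ContinuousLinearMap.apply ℝ ℝ (0, 1)).comp f'') x := hD (0, 1)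
    -- differentiate the eikonal relation
    have hgE : (fun y => (dx ψ y) ^ 2 + (dy ψ y) ^ 2) =ᶠ[nhds x] fun _ => lam ^ 2 := by
      filter_upwards [hPx] with y hy using heik y hy
    have hg : HasFDerivAt (fun y => (dx ψ y) ^ 2 + (dy ψ y) ^ 2)
        ((dx ψ x • ((ContinuousLinearMap.apply ℝ ℝ (1, 0)).comp f'')
          + dx ψ x • ((ContinuousLinearMap.apply ℝ ℝ (1, 0)).comp f''))
          + (dy ψ x • ((ContinuousLinearMap.apply ℝ ℝ (0, 1)).comp f'')
          + dy ψ x • ((ContinuousLinearMap.apply ℝ ℝ (0, 1)).comp f''))) x := by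
      have := (h1.mul h1).add (h2.mul h2)
      simpa [pow_two, Pi.add_def, Pi.mul_def] using this
    have hg0 : fderiv ℝ (fun y => (dx ψ y) ^ 2 + (dy ψ y) ^ 2) x = 0 := by
      rw [hgE.fderiv_eq]; exact fderiv_const_apply _
    have hG := hg.fderiv.symm.trans hg0
    have hG1 : dx ψ x * f'' (1, 0) (1, 0) + dy ψ x * f'' (1, 0) (0, 1) = 0 := by
      have := congrFun (congrArg DFunLike.coe hG) (1, 0)
      simp only [ContinuousLinearMap.add_apply, ContinuousLinearMap.smul_apply,
        ContinuousLinearMap.coe_comp', Function.comp_apply,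
        ContinuousLinearMap.apply_apply, ContinuousLinearMap.zero_apply, smul_eq_mul] at this
      linarith
    have hG2 : dx ψ x * f'' (0, 1) (1, 0) + dy ψ x * f'' (0, 1) (0, 1) = 0 := by
      have := congrFun (congrArg DFunLike.coe hG) (0, 1)
      simp only [ContinuousLinearMap.add_apply, ContinuousLinearMap.smul_apply,
        ContinuousLinearMap.coe_comp', Function.comp_apply,
        ContinuousLinearMap.apply_apply, ContinuousLinearMap.zero_apply, smul_eq_mul] at this
      linarith
    -- harmonicity
    have hxx : dx (dx ψ) x = f'' (1, 0) (1, 0) := by rw [dx, h1.fderiv]; rfl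
    have hyy : dy (dy ψ) x = f'' (0, 1) (0, 1) := by rw [dy, h2.fderiv]; rfl
    have hharm' : f'' (1, 0) (1, 0) + f'' (0, 1) (0, 1) = 0 := by
      have := hharm x hx
      unfold lap at this
      rwa [hxx, hyy] at this
    have hpq : dx ψ x ^ 2 + dy ψ x ^ 2 > 0 := by rw [heik x hx]; positivity
    have hBB : f'' (0, 1) (1, 0) = f'' (1, 0) (0, 1) := hsymm (0, 1) (1, 0)
    rw [hBB] at hG2
    have hA0' : (dx ψ x ^ 2 + dy ψ x ^ 2) * f'' (1, 0) (1, 0) = 0 := by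
      linear_combination dx ψ x * hG1 - dy ψ x * hG2 + dy ψ x ^ 2 * hharm'
    have hB0' : (dx ψ x ^ 2 + dy ψ x ^ 2) * f'' (1, 0) (0, 1) = 0 := by
      linear_combination dy ψ x * hG1 + dx ψ x * hG2 - dx ψ x * dy ψ x * hharm'
    have hne : dx ψ x ^ 2 + dy ψ x ^ 2 ≠ 0 := ne_of_gt hpq
    have hA0 : f'' (1, 0) (1, 0) = 0 := by
      rcases mul_eq_zero.1 hA0' with h | h
      · exact absurd h hne
      · exact h
    have hB0 : f'' (1, 0) (0, 1) = 0 := by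
      rcases mul_eq_zero.1 hB0' with h | h
      · exact absurd h hne
      · exact h
    have hz1 : (ContinuousLinearMap.apply ℝ ℝ ((1 : ℝ), (0 : ℝ))).comp f'' = 0 := by
      apply clm_eq_zero
      · simpa using hA0
      · simpa using hBB.trans hB0
    have hz2 : (ContinuousLinearMap.apply ℝ ℝ ((0 : ℝ), (1 : ℝ))).comp f'' = 0 := by
      apply clm_eq_zero
      · simpa using hB0
      · have : f'' (0, 1) (0, 1) = 0 := by linarith
        simpa using this
    exact ⟨hz1 ▸ h1, hz2 ▸ h2⟩
  constructor
  · intro x hx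
    obtain ⟨h1, h2⟩ := key x hx
    refine ⟨?_, ?_, ?_, ?_⟩
    · rw [dx, h1.fderiv]; rfl
    · rw [dx, h2.fderiv]; rfl
    · rw [dy, h1.fderiv]; rfl
    · rw [dy, h2.fderiv]; rfl
  · intro x₀ hx₀
    have hUo : IsOpen (connectedComponentIn P x₀) := hPo.connectedComponentIn
    have hUc : IsPreconnected (connectedComponentIn P x₀) := isPreconnected_connectedComponentIn
    have hUP : connectedComponentIn P x₀ ⊆ P := connectedComponentIn_subset P x₀
    have hx₀U : x₀ ∈ connectedComponentIn P x₀ := mem_connectedComponentIn hx₀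
    have hca : ∀ y ∈ connectedComponentIn P x₀, dx ψ y = dx ψ x₀ :=
      const_on_preconnected hUo hUc (dx ψ) (fun x hx => (key x (hUP hx)).1) hx₀U
    have hcb : ∀ y ∈ connectedComponentIn P x₀, dy ψ y = dy ψ x₀ :=
      const_on_preconnected hUo hUc (dy ψ) (fun x hx => (key x (hUP hx)).2) hx₀U
    set L : (ℝ × ℝ) →L[ℝ] ℝ := dx ψ x₀ • (ContinuousLinearMap.fst ℝ ℝ ℝ)
      + dy ψ x₀ • (ContinuousLinearMap.snd ℝ ℝ ℝ) with hL
    have hgd : ∀ x ∈ connectedComponentIn P x₀,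
        HasFDerivAt (fun p => ψ p - (dx ψ x₀ * p.1 + dy ψ x₀ * p.2))
          (0 : (ℝ × ℝ) →L[ℝ] ℝ) x := by
      intro x hx
      have hψd : HasFDerivAt ψ (fderiv ℝ ψ x) x :=
        ((hsmooth.contDiffAt (hPo.mem_nhds (hUP hx))).differentiableAt
          (by norm_num)).hasFDerivAt
      have hf'L : fderiv ℝ ψ x = L := by
        have e1 : fderiv ℝ ψ x (1, 0) = dx ψ x₀ := hca x hx
        have e2 : fderiv ℝ ψ x (0, 1) = dy ψ x₀ := hcb x hx
        have h0 : fderiv ℝ ψ x - L = 0 := by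
          apply clm_eq_zero
          · simp [hL, e1]
          · simp [hL, e2]
        exact sub_eq_zero.mp h0
      have hLd : HasFDerivAt (fun p : ℝ × ℝ => dx ψ x₀ * p.1 + dy ψ x₀ * p.2) L x := by
        have hh := L.hasFDerivAt (x := x)
        have : ⇑L = fun p : ℝ × ℝ => dx ψ x₀ * p.1 + dy ψ x₀ * p.2 := by
          funext p; simp [hL]
        rwa [this] at hh
      have hs := hψd.sub hLd
      rw [hf'L, sub_self] at hs
      exact hs
    refine ⟨dx ψ x₀, dy ψ x₀, ψ x₀ - (dx ψ x₀ * x₀.1 + dy ψ x₀ * x₀.2), fun x hx => ?_⟩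
    have := const_on_preconnected hUo hUc _ hgd hx₀U x hx
    linarith [this]
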